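/- Let S be a bigraded staircase complex over F₂[W,Z]. Then every chain map f: S → S of bidegree (−1, −1) is null-homotopic. -/
import Mathlib


noncomputable section

open MvPolynomial

/-- `R = F₂[W,Z]`. -/
abbrev R2 : Type := MvPolynomial (Fin 2) (ZMod 2)

def Wv : R2 := X 0
def Zv : R2 := X 1

/-- Coefficient of the monomial `W^p Z^q`. -/
def coeffAt (p q : ℕ) (f : R2) : ZMod 2 :=
  MvPolynomial.coeff (Finsupp.single (0 : Fin 2) p + Finsupp.single (1 : Fin 2) q) f

/-- The staircase differential as an endomorphism matrix of the total module on
generators `x_0, …, x_{2n}`: `d(x_{2i+1}) = x_{2i}·W^{a_i} + x_{2i+2}·Z^{b_i}`,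
`d(x_{2i}) = 0`. -/
def stairD (n : ℕ) (a b : Fin n → ℕ) :
    Matrix (Fin (2 * n + 1)) (Fin (2 * n + 1)) R2 :=
  fun j i =>
    if h : (i : ℕ) % 2 = 1 then
      if (j : ℕ) + 1 = (i : ℕ) then Wv ^ a ⟨(i : ℕ) / 2, by have := i.isLt; omega⟩
      else if (j : ℕ) = (i : ℕ) + 1 then Zv ^ b ⟨(i : ℕ) / 2, by have := i.isLt; omega⟩
      else 0
    else 0

/-- A matrix `M` (representing an `R`-module map) is homogeneous of bidegree `(dW, dZ)`
with respect to generator bigradings, where `W` has bidegree `(−2,0)` and `Z` has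
`(0,−2)`: every monomial `W^p Z^q` occurring in the `(j,i)` entry satisfies the
corresponding grading equations. -/
def hasBideg {k l : ℕ} (grWs grZs : Fin k → ℤ) (grWt grZt : Fin l → ℤ)
    (dW dZ : ℤ) (M : Matrix (Fin l) (Fin k) R2) : Prop :=
  ∀ (i : Fin k) (j : Fin l) (p q : ℕ), coeffAt p q (M j i) ≠ 0 →
    grWt j - 2 * (p : ℤ) = grWs i + dW ∧ grZt j - 2 * (q : ℤ) = grZs i + dZ


namespace StairAux

def sing2 (p q : ℕ) : Fin 2 →₀ ℕ := Finsupp.single 0 p + Finsupp.single 1 q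

lemma sing2_apply0 (p q : ℕ) : sing2 p q 0 = p := by simp [sing2]
lemma sing2_apply1 (p q : ℕ) : sing2 p q 1 = q := by simp [sing2]

lemma eq_sing2 (m : Fin 2 →₀ ℕ) : m = sing2 (m 0) (m 1) := by
  ext x
  fin_cases x <;> simp [sing2]

lemma coeffAt_def (p q : ℕ) (f : R2) : coeffAt p q f = MvPolynomial.coeff (sing2 p q) f := rfl

lemma monomial_eq (c : ZMod 2) (p q : ℕ) :
    (C c * Wv ^ p * Zv ^ q : R2) = monomial (sing2 p q) c := by
  rw [Wv, Zv, X_pow_eq_monomial, X_pow_eq_monomial, C_apply, sing2,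
    monomial_mul, monomial_mul]
  simp

lemma coeffAt_CWZ (p q p0 q0 : ℕ) (c : ZMod 2) :
    coeffAt p q (C c * Wv ^ p0 * Zv ^ q0) = if p = p0 ∧ q = q0 then c else 0 := by
  rw [monomial_eq, coeffAt_def, coeff_monomial]
  congr 1
  simp only [eq_iff_iff]
  constructor
  · intro h
    have h0 := congrArg (fun m => m 0) h
    have h1 := congrArg (fun m => m 1) h
    simp only [sing2_apply0, sing2_apply1] at h0 h1
    exact ⟨h0.symm, h1.symm⟩
  · rintro ⟨rfl, rfl⟩; rfl

lemma eq_single_monomial (f : R2) (p0 q0 : ℕ)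
    (h : ∀ p q, coeffAt p q f ≠ 0 → p = p0 ∧ q = q0) :
    f = C (coeffAt p0 q0 f) * Wv ^ p0 * Zv ^ q0 := by
  apply MvPolynomial.ext
  intro m
  have hm : m = sing2 (m 0) (m 1) := eq_sing2 m
  rw [hm]
  rw [← coeffAt_def, ← coeffAt_def, coeffAt_CWZ]
  by_cases hc : coeffAt (m 0) (m 1) f = 0
  · rw [hc]
    split
    · next hh => rw [hh.1, hh.2] at hc; exact hc.symm
    · rfl
  · obtain ⟨rfl, rfl⟩ := h _ _ hc
    simp

lemma eq_zero_poly (f : R2) (h : ∀ p q, coeffAt p q f = 0) : f = 0 := by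
  apply MvPolynomial.ext
  intro m
  rw [eq_sing2 m, ← coeffAt_def, h]
  simp

lemma coeffAt_W_pow (p : ℕ) : coeffAt p 0 (Wv ^ p) = 1 := by
  have : (Wv ^ p : R2) = C 1 * Wv ^ p * Zv ^ 0 := by simp
  rw [this, coeffAt_CWZ]
  simp

lemma coeffAt_Z_pow (q : ℕ) : coeffAt 0 q (Zv ^ q) = 1 := by
  have : (Zv ^ q : R2) = C 1 * Wv ^ 0 * Zv ^ q := by simp
  rw [this, coeffAt_CWZ]
  simp

lemma h2z : ∀ x y : ZMod 2, x + y + x = y := by decide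
lemma h2z' : ∀ x y : ZMod 2, x + (x + y) = y := by decide

lemma W_pow_ne_zero (p : ℕ) : (Wv ^ p : R2) ≠ 0 := pow_ne_zero _ (X_ne_zero 0)
lemma Z_pow_ne_zero (q : ℕ) : (Zv ^ q : R2) ≠ 0 := pow_ne_zero _ (X_ne_zero 1)

end StairAux


open StairAux

/-- Every chain map `f : S → S` of bidegree `(−1,−1)` on a bigraded staircase complex
over `F₂[W,Z]` is null-homotopic: `f = d∘H + H∘d` for some module map `H`. -/
theorem stmt_8 (n : ℕ) (a b : Fin n → ℕ) (ha : ∀ i, 0 < a i) (hb : ∀ i, 0 < b i)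
    (grW grZ : Fin (2 * n + 1) → ℤ)
    (hD : hasBideg grW grZ grW grZ (-1) (-1) (stairD n a b))
    (f : Matrix (Fin (2 * n + 1)) (Fin (2 * n + 1)) R2)
    (hf : hasBideg grW grZ grW grZ (-1) (-1) f)
    (hchain : f * stairD n a b = stairD n a b * f) :
    ∃ H : Matrix (Fin (2 * n + 1)) (Fin (2 * n + 1)) R2,
      f = stairD n a b * H + H * stairD n a b := by
  classical
  -- basic entry lemmas for stairD
  have hDcol0 : ∀ (j i : Fin (2*n+1)), (i:ℕ) % 2 = 0 → stairD n a b j i = 0 := by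
    intro j i h
    simp only [stairD]
    rw [dif_neg (by omega)]
  have hD0 : ∀ (j i : Fin (2*n+1)),
      ¬((i:ℕ) % 2 = 1 ∧ ((j:ℕ)+1 = (i:ℕ) ∨ (j:ℕ) = (i:ℕ)+1)) → stairD n a b j i = 0 := by
    intro j i h
    simp only [stairD]
    by_cases h1 : (i:ℕ) % 2 = 1
    · rw [dif_pos h1, if_neg (fun hc => h ⟨h1, Or.inl hc⟩), if_neg (fun hc => h ⟨h1, Or.inr hc⟩)]
    · rw [dif_neg h1]
  have hDW : ∀ (j i : Fin (2*n+1)) (k : ℕ) (hk : k < n), (j:ℕ) = 2*k → (i:ℕ) = 2*k+1 →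
      stairD n a b j i = Wv ^ a ⟨k, hk⟩ := by
    intro j i k hk hj hi
    simp only [stairD]
    rw [dif_pos (by omega), if_pos (by omega)]
    congr 2
    apply Fin.ext
    show (i:ℕ)/2 = k
    omega
  have hDZ : ∀ (j i : Fin (2*n+1)) (k : ℕ) (hk : k < n), (j:ℕ) = 2*k+2 → (i:ℕ) = 2*k+1 →
      stairD n a b j i = Zv ^ b ⟨k, hk⟩ := by
    intro j i k hk hj hi
    simp only [stairD]
    rw [dif_pos (by omega), if_neg (by omega), if_pos (by omega)]
    congr 2
    apply Fin.ext
    show (i:ℕ)/2 = k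
    omega
  -- lift the gradings to ℕ
  obtain ⟨gW, hgrW⟩ : ∃ g : ℕ → ℤ, ∀ j : Fin (2*n+1), grW j = g (j:ℕ) :=
    ⟨fun m => if h : m < 2*n+1 then grW ⟨m, h⟩ else 0, fun j => by
      show grW j = if h : (j:ℕ) < 2*n+1 then grW ⟨(j:ℕ), h⟩ else 0
      rw [dif_pos j.isLt]⟩
  obtain ⟨gZ, hgrZ⟩ : ∃ g : ℕ → ℤ, ∀ j : Fin (2*n+1), grZ j = g (j:ℕ) :=
    ⟨fun m => if h : m < 2*n+1 then grZ ⟨m, h⟩ else 0, fun j => by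
      show grZ j = if h : (j:ℕ) < 2*n+1 then grZ ⟨(j:ℕ), h⟩ else 0
      rw [dif_pos j.isLt]⟩
  -- the grading relations coming from homogeneity of d
  have hrel : ∀ (k : ℕ) (hk : k < n),
      gW (2*k) - 2*((a ⟨k,hk⟩ : ℕ) : ℤ) = gW (2*k+1) - 1 ∧
      gZ (2*k) = gZ (2*k+1) - 1 ∧
      gW (2*k+2) = gW (2*k+1) - 1 ∧
      gZ (2*k+2) - 2*((b ⟨k,hk⟩ : ℕ) : ℤ) = gZ (2*k+1) - 1 := by
    intro k hk
    have h1 := hD ⟨2*k+1, by omega⟩ ⟨2*k, by omega⟩ (a ⟨k,hk⟩) 0 (by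
      rw [hDW ⟨2*k, by omega⟩ ⟨2*k+1, by omega⟩ k hk rfl rfl, coeffAt_W_pow]
      exact one_ne_zero)
    have h2 := hD ⟨2*k+1, by omega⟩ ⟨2*k+2, by omega⟩ 0 (b ⟨k,hk⟩) (by
      rw [hDZ ⟨2*k+2, by omega⟩ ⟨2*k+1, by omega⟩ k hk rfl rfl, coeffAt_Z_pow]
      exact one_ne_zero)
    obtain ⟨e1, e2⟩ := h1
    obtain ⟨e3, e4⟩ := h2
    simp only [hgrW] at e1 e3
    simp only [hgrZ] at e2 e4
    refine ⟨by push_cast at e1 ⊢; omega, by push_cast at e2 ⊢; omega,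
      by push_cast at e3 ⊢; omega, by push_cast at e4 ⊢; omega⟩
  -- parity of the W-grading
  have hparW : ∀ m : ℕ, m ≤ n → ∃ c : ℤ, gW (2*m) = gW 0 - 2*c := by
    intro m
    induction m with
    | zero => intro _; exact ⟨0, by norm_num⟩
    | succ m ih =>
      intro hm
      have hm' : m < n := by omega
      obtain ⟨c, hc⟩ := ih (by omega)
      obtain ⟨e1, -, e3, -⟩ := hrel m hm'
      refine ⟨c + ((a ⟨m, hm'⟩ : ℕ) : ℤ), ?_⟩
      rw [show 2*(m+1) = 2*m+2 by ring]
      omega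
  have hparWodd : ∀ k : ℕ, k < n → ∃ c : ℤ, gW (2*k+1) = gW 0 - 2*c + 1 := by
    intro k hk
    obtain ⟨c, hc⟩ := hparW k (by omega)
    obtain ⟨e1, -, -, -⟩ := hrel k hk
    exact ⟨c + ((a ⟨k, hk⟩ : ℕ) : ℤ), by omega⟩
  -- monotonicity
  have hmonW : ∀ (m0 d : ℕ), m0 + d ≤ n → gW (2*(m0+d)) ≤ gW (2*m0) - 2*(d:ℤ) := by
    intro m0 d
    induction d with
    | zero => intro _; norm_num
    | succ d ih =>
      intro hm
      have hd' : m0 + d < n := by omega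
      have ihh := ih (by omega)
      obtain ⟨e1, -, e3, -⟩ := hrel (m0+d) hd'
      have hapos := ha ⟨m0+d, hd'⟩
      rw [show 2*(m0+(d+1)) = 2*(m0+d)+2 by ring]
      push_cast
      omega
  have hmonZ : ∀ (m0 d : ℕ), m0 + d ≤ n → gZ (2*m0) + 2*(d:ℤ) ≤ gZ (2*(m0+d)) := by
    intro m0 d
    induction d with
    | zero => intro _; norm_num
    | succ d ih =>
      intro hm
      have hd' : m0 + d < n := by omega
      have ihh := ih (by omega)
      obtain ⟨-, e2, -, e4⟩ := hrel (m0+d) hd'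
      have hbpos := hb ⟨m0+d, hd'⟩
      rw [show 2*(m0+(d+1)) = 2*(m0+d)+2 by ring]
      push_cast
      omega
  -- the chain condition kills the even columns against odd rows
  have hfD0 : ∀ (j i : Fin (2*n+1)), (i:ℕ) % 2 = 0 → (stairD n a b * f) j i = 0 := by
    intro j i hi
    rw [← hchain, Matrix.mul_apply]
    apply Finset.sum_eq_zero
    intro k _
    rw [hDcol0 k i hi, mul_zero]
  have hrow0 : ∀ (hn : 0 < n) (i : Fin (2*n+1)),
      (stairD n a b * f) ⟨0, by omega⟩ i = Wv ^ a ⟨0, hn⟩ * f ⟨1, by omega⟩ i := by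
    intro hn i
    rw [Matrix.mul_apply]
    have e : ∑ x : Fin (2*n+1), stairD n a b ⟨0, by omega⟩ x * f x i
        = stairD n a b ⟨0, by omega⟩ ⟨1, by omega⟩ * f ⟨1, by omega⟩ i := by
      apply Finset.sum_eq_single_of_mem _ (Finset.mem_univ _)
      intro x _ hx
      have hx1 : (x:ℕ) ≠ 1 := fun hc => hx (Fin.ext hc)
      rw [hD0, zero_mul]
      rintro ⟨hp, hor⟩
      revert hor
      show ¬ (0 + 1 = (x:ℕ) ∨ 0 = (x:ℕ) + 1)
      omega
    rw [e, hDW ⟨0, by omega⟩ ⟨1, by omega⟩ 0 hn rfl rfl]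
  have hrow2 : ∀ (m : ℕ) (hm : m + 1 < n) (i : Fin (2*n+1)),
      (stairD n a b * f) ⟨2*m+2, by omega⟩ i
        = Wv ^ a ⟨m+1, hm⟩ * f ⟨2*m+3, by omega⟩ i
          + Zv ^ b ⟨m, by omega⟩ * f ⟨2*m+1, by omega⟩ i := by
    intro m hm i
    rw [Matrix.mul_apply,
      ← Finset.sum_erase_add _ _ (Finset.mem_univ (⟨2*m+1, by omega⟩ : Fin (2*n+1)))]
    congr 1
    · have e : ∑ x ∈ Finset.univ.erase (⟨2*m+1, by omega⟩ : Fin (2*n+1)),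
          stairD n a b ⟨2*m+2, by omega⟩ x * f x i
          = stairD n a b ⟨2*m+2, by omega⟩ ⟨2*m+3, by omega⟩ * f ⟨2*m+3, by omega⟩ i := by
        apply Finset.sum_eq_single_of_mem
        · refine Finset.mem_erase.mpr ⟨fun hc => ?_, Finset.mem_univ _⟩
          have := congrArg Fin.val hc
          show False
          revert this
          show ¬ (2*m+3 = 2*m+1)
          omega
        · intro x hxs hx
          have hx1 : (x:ℕ) ≠ 2*m+3 := fun hc => hx (Fin.ext hc)
          have hx2 : (x:ℕ) ≠ 2*m+1 := fun hc =>
            (Finset.mem_erase.mp hxs).1 (Fin.ext hc)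
          rw [hD0, zero_mul]
          rintro ⟨hp, hor⟩
          revert hor
          show ¬ (2*m+2 + 1 = (x:ℕ) ∨ 2*m+2 = (x:ℕ) + 1)
          omega
      rw [e, hDW ⟨2*m+2, by omega⟩ ⟨2*m+3, by omega⟩ (m+1) hm rfl rfl]
    · rw [hDZ ⟨2*m+2, by omega⟩ ⟨2*m+1, by omega⟩ m (by omega) rfl rfl]
  -- odd rows of f vanish on even columns
  have hstep : ∀ (i : Fin (2*n+1)), (i:ℕ) % 2 = 0 →
      ∀ (m : ℕ) (hm : m < n), f ⟨2*m+1, by omega⟩ i = 0 := by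
    intro i hi m
    induction m with
    | zero =>
      intro hm
      have h0 : (stairD n a b * f) ⟨0, by omega⟩ i = 0 := hfD0 _ _ hi
      rw [hrow0 hm i] at h0
      rcases mul_eq_zero.mp h0 with h | h
      · exact absurd h (W_pow_ne_zero _)
      · exact h
    | succ m ih =>
      intro hm
      have h0 : (stairD n a b * f) ⟨2*m+2, by omega⟩ i = 0 := hfD0 _ _ hi
      rw [hrow2 m hm i, ih (by omega), mul_zero, add_zero] at h0
      rcases mul_eq_zero.mp h0 with h | h
      · exact absurd h (W_pow_ne_zero _)
      · exact h
  -- all even columns of f vanish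
  have hfcol0 : ∀ (j i : Fin (2*n+1)), (i:ℕ) % 2 = 0 → f j i = 0 := by
    intro j i hi
    rcases Nat.even_or_odd (j:ℕ) with hje | hjo
    · -- even row: parity of gradings
      apply eq_zero_poly
      intro p q
      by_contra hc
      obtain ⟨e1, -⟩ := hf i j p q hc
      rw [hgrW j, hgrW i] at e1
      obtain ⟨mj, hmj⟩ : ∃ mj, (j:ℕ) = 2*mj := by
        obtain ⟨t, ht⟩ := hje; exact ⟨t, by omega⟩
      obtain ⟨mi, hmi⟩ : ∃ mi, (i:ℕ) = 2*mi := ⟨(i:ℕ)/2, by omega⟩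
      rw [hmj, hmi] at e1
      obtain ⟨cj, hcj⟩ := hparW mj (by have := j.isLt; omega)
      obtain ⟨ci, hci⟩ := hparW mi (by have := i.isLt; omega)
      omega
    · -- odd row: chain condition
      obtain ⟨m, hm⟩ : ∃ m, (j:ℕ) = 2*m+1 := by
        obtain ⟨t, ht⟩ := hjo; exact ⟨t, by omega⟩
      have hmn : m < n := by have := j.isLt; omega
      have := hstep i hi m hmn
      rwa [show (⟨2*m+1, by omega⟩ : Fin (2*n+1)) = j from Fin.ext hm.symm] at this
  -- the homotopy
  let cN : ℕ → ZMod 2 := fun m =>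
    if h : m < n then coeffAt (a ⟨m,h⟩) 0 (f ⟨2*m, by omega⟩ ⟨2*m+1, by omega⟩) else 0
  let c'N : ℕ → ZMod 2 := fun m =>
    if h : m < n then coeffAt 0 (b ⟨m,h⟩) (f ⟨2*m+2, by omega⟩ ⟨2*m+1, by omega⟩) else 0
  let tf : ℕ → ZMod 2 := fun m => Nat.rec 0 (fun m' ih => ih + cN m' + c'N m') m
  have htf : ∀ m, tf (m+1) = tf m + cN m + c'N m := fun m => rfl
  refine ⟨Matrix.diagonal (fun k : Fin (2*n+1) =>
    if (k:ℕ) % 2 = 1 then C (tf ((k:ℕ)/2) + cN ((k:ℕ)/2)) else C (tf ((k:ℕ)/2))), ?_⟩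
  refine Matrix.ext fun j i => ?_
  simp only [Matrix.add_apply, Matrix.mul_diagonal, Matrix.diagonal_mul]
  rcases Nat.even_or_odd (i:ℕ) with hie | hio
  · have hie' : (i:ℕ) % 2 = 0 := by obtain ⟨t,ht⟩ := hie; omega
    rw [hfcol0 j i hie', hDcol0 j i hie', zero_mul, mul_zero, add_zero]
  · obtain ⟨k, hik⟩ : ∃ k, (i:ℕ) = 2*k+1 := by obtain ⟨t,ht⟩ := hio; exact ⟨t, by omega⟩
    have hkn : k < n := by have := i.isLt; omega
    obtain ⟨r1, r2, r3, r4⟩ := hrel k hkn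
    rw [hik, if_pos (show (2*k+1) % 2 = 1 by omega), show (2*k+1)/2 = k by omega]
    by_cases hj0 : (j:ℕ) = 2*k
    · -- the W-step entry
      have hfji : f j i = f ⟨2*k, by omega⟩ ⟨2*k+1, by omega⟩ := by
        rw [show (⟨2*k, by omega⟩ : Fin (2*n+1)) = j from Fin.ext hj0.symm,
            show (⟨2*k+1, by omega⟩ : Fin (2*n+1)) = i from Fin.ext hik.symm]
      have hcoef : ∀ p q, coeffAt p q (f j i) ≠ 0 → p = a ⟨k,hkn⟩ ∧ q = 0 := by
        intro p q hc
        obtain ⟨e1, e2⟩ := hf i j p q hc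
        rw [hgrW j, hgrW i, hik, hj0] at e1
        rw [hgrZ j, hgrZ i, hik, hj0] at e2
        exact ⟨by omega, by omega⟩
      have hfv := eq_single_monomial (f j i) (a ⟨k,hkn⟩) 0 hcoef
      have hcN : cN k = coeffAt (a ⟨k,hkn⟩) 0 (f j i) := by
        show (if h : k < n then coeffAt (a ⟨k,h⟩) 0 (f ⟨2*k, by omega⟩ ⟨2*k+1, by omega⟩)
          else 0) = _
        rw [dif_pos hkn, ← hfji]
      rw [hDW j i k hkn hj0 hik, hj0, if_neg (show ¬(2*k % 2 = 1) by omega),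
        show 2*k/2 = k by omega, hfv, ← hcN, pow_zero, mul_one,
        mul_comm ((Wv:R2) ^ a ⟨k,hkn⟩) (C (tf k + cN k)), ← add_mul, ← map_add, h2z]
    · by_cases hj2 : (j:ℕ) = 2*k+2
      · -- the Z-step entry
        have hfji : f j i = f ⟨2*k+2, by omega⟩ ⟨2*k+1, by omega⟩ := by
          rw [show (⟨2*k+2, by omega⟩ : Fin (2*n+1)) = j from Fin.ext hj2.symm,
              show (⟨2*k+1, by omega⟩ : Fin (2*n+1)) = i from Fin.ext hik.symm]
        have hcoef : ∀ p q, coeffAt p q (f j i) ≠ 0 → p = 0 ∧ q = b ⟨k,hkn⟩ := by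
          intro p q hc
          obtain ⟨e1, e2⟩ := hf i j p q hc
          rw [hgrW j, hgrW i, hik, hj2] at e1
          rw [hgrZ j, hgrZ i, hik, hj2] at e2
          exact ⟨by omega, by omega⟩
        have hfv := eq_single_monomial (f j i) 0 (b ⟨k,hkn⟩) hcoef
        have hc'N : c'N k = coeffAt 0 (b ⟨k,hkn⟩) (f j i) := by
          show (if h : k < n then coeffAt 0 (b ⟨k,h⟩) (f ⟨2*k+2, by omega⟩ ⟨2*k+1, by omega⟩)
            else 0) = _
          rw [dif_pos hkn, ← hfji]
        rw [hDZ j i k hkn hj2 hik, hj2, if_neg (show ¬((2*k+2) % 2 = 1) by omega),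
          show (2*k+2)/2 = k+1 by omega, htf, hfv, ← hc'N, pow_zero, mul_one,
          mul_comm ((Zv:R2) ^ b ⟨k,hkn⟩) (C (tf k + cN k)), ← add_mul, ← map_add,
          show tf k + cN k + (tf k + cN k + c'N k) = c'N k from h2z' _ _]
      · -- all other entries vanish
        rw [hD0 j i (by rintro ⟨h1, h2⟩; omega), zero_mul, mul_zero, add_zero]
        rcases Nat.even_or_odd (j:ℕ) with hje | hjo
        · obtain ⟨m, hjm⟩ : ∃ m, (j:ℕ) = 2*m := by obtain ⟨t,ht⟩ := hje; exact ⟨t, by omega⟩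
          have hmn : m ≤ n := by have := j.isLt; omega
          apply eq_zero_poly
          intro p q
          by_contra hc
          obtain ⟨e1, e2⟩ := hf i j p q hc
          rw [hgrW j, hgrW i, hik, hjm] at e1
          rw [hgrZ j, hgrZ i, hik, hjm] at e2
          rcases Nat.lt_or_ge m k with hmk | hmk
          · have hz := hmonZ m (k - m) (by omega)
            rw [show m + (k - m) = k by omega] at hz
            omega
          · have hmk' : k + 2 ≤ m := by omega
            have hw := hmonW (k+1) (m - (k+1)) (by omega)
            rw [show (k+1) + (m - (k+1)) = m by omega,
              show 2*(k+1) = 2*k+2 by ring] at hw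
            omega
        · obtain ⟨m, hjm⟩ : ∃ m, (j:ℕ) = 2*m+1 := by obtain ⟨t,ht⟩ := hjo; exact ⟨t, by omega⟩
          have hmn : m < n := by have := j.isLt; omega
          apply eq_zero_poly
          intro p q
          by_contra hc
          obtain ⟨e1, -⟩ := hf i j p q hc
          rw [hgrW j, hgrW i, hik, hjm] at e1
          obtain ⟨cj, hcj⟩ := hparWodd m hmn
          obtain ⟨ci, hci⟩ := hparWodd k hkn
          omega

end
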